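/- Consider minimizing f(E^s, E^b) = C(E^c + E^s - Σ_j E^b_j) + Σ_j γ(E^b_j) + Σ_j λ_j E^b_j - λ_i E^s over E^s ≥ 0, E^b_j ≥ 0, E^c + E^s - Σ_j E^b_j ≥ 0, with C, γ strictly convex increasing differentiable, γ(0)=0, E^c > 0. Let S* = {j : λ_j < λ_i - γ'(0)} and suppose λ_i > C'(0), S* ≠ ∅, and λ_i > C'(E^c - Σ_{j∈S*} Γ(λ_i - λ_j)), where Γ = (γ')⁻¹. Then the unique global minimizer is E^b_j = Γ(λ_i - λ_j) for j ∈ S*, E^b_j = 0 otherwise, generated energy E^g = χ(λ_i) with χ = (C')⁻¹, and E^s = E^g + Σ_{j∈S*} E^b_j - E^c. -/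
import Mathlib


open Set Finset

/-- Local net expenditure of a microgrid. -/
noncomputable def netExpenditure {ι : Type*} [Fintype ι]
    (C γ : ℝ → ℝ) (Ec lamI : ℝ) (lam : ι → ℝ) (Es : ℝ) (Eb : ι → ℝ) : ℝ :=
  C (Ec + Es - ∑ j, Eb j) + ∑ j, γ (Eb j) + ∑ j, lam j * Eb j - lamI * Es

/-- Strict tangent line inequality for strictly convex differentiable functions. -/
lemma tangent_lt {f : ℝ → ℝ} (hf : StrictConvexOn ℝ Set.univ f)
    (hd : Differentiable ℝ f) {a x : ℝ} (hne : x ≠ a) :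
    f a + deriv f a * (x - a) < f x := by
  rcases hne.lt_or_gt with h | h
  · have hs := hf.slope_lt_deriv (Set.mem_univ x) (Set.mem_univ a) h (hd a)
    rw [slope_def_field] at hs
    have hax : 0 < a - x := by linarith
    have h2 : f a - f x < deriv f a * (a - x) := by
      have := (div_lt_iff₀ hax).mp (by simpa [div_eq_iff hax.ne'] using hs)
      linarith [this]
    nlinarith
  · have hs := hf.deriv_lt_slope (Set.mem_univ a) (Set.mem_univ x) h (hd a)
    rw [slope_def_field] at hs
    have hax : 0 < x - a := by linarith
    have h2 : deriv f a * (x - a) < f x - f a := by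
      have := (lt_div_iff₀ hax).mp hs
      linarith
    linarith

/-- Case 6 of the microgrid subproblem: the microgrid sells, buys and generates.
`g = χ(λᵢ)` is the generated energy and `B j = Γ(λᵢ - λⱼ)` the bought energies. -/
theorem case6_sell_buy_generate
    {ι : Type*} [Fintype ι]
    (C γ : ℝ → ℝ)
    (hCconv : StrictConvexOn ℝ Set.univ C) (hCmono : StrictMono C)
    (hCdiff : Differentiable ℝ C)
    (hγconv : StrictConvexOn ℝ Set.univ γ) (hγmono : StrictMono γ)
    (hγdiff : Differentiable ℝ γ) (hγ0 : γ 0 = 0)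
    (Ec : ℝ) (hEc : 0 < Ec)
    (lamI : ℝ) (lam : ι → ℝ)
    (g : ℝ) (hg : deriv C g = lamI)  -- g = χ(λᵢ)
    (B : ι → ℝ)
    (hB : ∀ j, lam j < lamI - deriv γ 0 → deriv γ (B j) = lamI - lam j ∧ 0 < B j)
    (hlamI : lamI > deriv C 0)
    (hSne : ∃ j, lam j < lamI - deriv γ 0)
    (hgen : lamI > deriv C (Ec - ∑ j ∈ Finset.univ.filter
        (fun j => lam j < lamI - deriv γ 0), B j)) :
    ∀ (Es : ℝ) (Eb : ι → ℝ), 0 ≤ Es → (∀ j, 0 ≤ Eb j) →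
      0 ≤ Ec + Es - ∑ j, Eb j →
      netExpenditure C γ Ec lamI lam
          (g + (∑ j ∈ Finset.univ.filter (fun j => lam j < lamI - deriv γ 0), B j) - Ec)
          (fun j => if lam j < lamI - deriv γ 0 then B j else 0) ≤
        netExpenditure C γ Ec lamI lam Es Eb ∧
      (netExpenditure C γ Ec lamI lam Es Eb =
          netExpenditure C γ Ec lamI lam
            (g + (∑ j ∈ Finset.univ.filter (fun j => lam j < lamI - deriv γ 0), B j) - Ec)
            (fun j => if lam j < lamI - deriv γ 0 then B j else 0) →
        Es = g + (∑ j ∈ Finset.univ.filter (fun j => lam j < lamI - deriv γ 0), B j) - Ec ∧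
          Eb = fun j => if lam j < lamI - deriv γ 0 then B j else 0) := by
  intro Es Eb hEs hEb hGfeas
  set EbStar : ι → ℝ := fun j => if lam j < lamI - deriv γ 0 then B j else 0 with hEbStar
  set EsStar : ℝ :=
    g + (∑ j ∈ Finset.univ.filter (fun j => lam j < lamI - deriv γ 0), B j) - Ec with hEsStar
  have hsumStar : ∑ j, EbStar j
      = ∑ j ∈ Finset.univ.filter (fun j => lam j < lamI - deriv γ 0), B j := by
    rw [hEbStar, ← Finset.sum_filter]
  have hGstar : Ec + EsStar - ∑ j, EbStar j = g := by
    rw [hsumStar, hEsStar]; ring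
  -- decomposition
  have decomp : ∀ (es : ℝ) (eb : ι → ℝ), netExpenditure C γ Ec lamI lam es eb
      = (C (Ec + es - ∑ j, eb j) - lamI * (Ec + es - ∑ j, eb j))
        + (∑ j, (γ (eb j) + (lam j - lamI) * eb j)) + lamI * Ec := by
    intro es eb
    simp only [netExpenditure, Finset.sum_add_distrib, sub_mul, Finset.sum_sub_distrib,
      ← Finset.mul_sum]
    ring
  have decompStar : netExpenditure C γ Ec lamI lam EsStar EbStar
      = (C g - lamI * g) + (∑ j, (γ (EbStar j) + (lam j - lamI) * EbStar j)) + lamI * Ec := by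
    rw [decomp, hGstar]
  -- generation term
  have termC : ∀ G : ℝ, (C g - lamI * g ≤ C G - lamI * G)
      ∧ (G ≠ g → C g - lamI * g < C G - lamI * G) := by
    intro G
    by_cases hGg : G = g
    · subst hGg; exact ⟨le_refl _, fun h => absurd rfl h⟩
    · have ht := tangent_lt hCconv hCdiff hGg
      rw [hg] at ht
      constructor
      · nlinarith
      · intro _; nlinarith
  -- buying terms
  have termφ : ∀ j, ∀ t : ℝ, 0 ≤ t →
      (γ (EbStar j) + (lam j - lamI) * EbStar j ≤ γ t + (lam j - lamI) * t)
      ∧ (t ≠ EbStar j →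
          γ (EbStar j) + (lam j - lamI) * EbStar j < γ t + (lam j - lamI) * t) := by
    intro j t ht
    by_cases hj : lam j < lamI - deriv γ 0
    · have hBj := hB j hj
      have hstar : EbStar j = B j := by simp [hEbStar, hj]
      rw [hstar]
      by_cases hte : t = B j
      · subst hte; exact ⟨le_refl _, fun h => absurd rfl h⟩
      · have hlt := tangent_lt hγconv hγdiff hte
        rw [hBj.1] at hlt
        constructor
        · nlinarith
        · intro _; nlinarith
    · have hstar : EbStar j = 0 := by simp [hEbStar, hj]
      rw [hstar]
      have hle : lamI - lam j ≤ deriv γ 0 := by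
        push_neg at hj; linarith
      by_cases ht0 : t = 0
      · subst ht0; exact ⟨le_refl _, fun h => absurd rfl h⟩
      · have htpos : 0 < t := lt_of_le_of_ne ht (Ne.symm ht0)
        have hlt := tangent_lt hγconv hγdiff (a := 0) ht0
        rw [hγ0] at hlt
        constructor
        · nlinarith
        · intro _; nlinarith
  have hsum_le : ∑ j, (γ (EbStar j) + (lam j - lamI) * EbStar j)
      ≤ ∑ j, (γ (Eb j) + (lam j - lamI) * Eb j) :=
    Finset.sum_le_sum (fun j _ => (termφ j (Eb j) (hEb j)).1)
  have hCle := (termC (Ec + Es - ∑ j, Eb j)).1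
  constructor
  · rw [decompStar, decomp]; linarith
  · intro heq
    rw [decompStar, decomp] at heq
    have hEbeq : Eb = EbStar := by
      by_contra hne
      have hex : ∃ j, Eb j ≠ EbStar j := by
        by_contra hall
        push_neg at hall
        exact hne (funext hall)
      obtain ⟨j0, hj0⟩ := hex
      have hstrict : ∑ j, (γ (EbStar j) + (lam j - lamI) * EbStar j)
          < ∑ j, (γ (Eb j) + (lam j - lamI) * Eb j) :=
        Finset.sum_lt_sum (fun j _ => (termφ j (Eb j) (hEb j)).1)
          ⟨j0, Finset.mem_univ _, (termφ j0 (Eb j0) (hEb j0)).2 hj0⟩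
      linarith
    have hGeq : Ec + Es - ∑ j, Eb j = g := by
      by_contra hne
      have := (termC (Ec + Es - ∑ j, Eb j)).2 hne
      linarith
    refine ⟨?_, hEbeq⟩
    have : ∑ j, Eb j = ∑ j, EbStar j := by rw [hEbeq]
    rw [hsumStar] at this
    rw [hEsStar]
    linarith [hGeq, this]
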